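/- Let R ≥ 2 and let a ≥ 2 be an even integer. Let λ_1, …, λ_R be positive and pairwise distinct reals, and fix k ∈ {1,…,R}. Suppose v : [0,∞) → ℝ^R is a solution of the loading dynamics dv_i/dt = λ_i v_i^a − v_i ∑_{j=1}^R λ_j v_j^{a+1} whose initial condition satisfies v_k(0) > 0 and, for every i ≠ k, λ_i^{1/(a−1)} v_i(0) < λ_k^{1/(a−1)} v_k(0). Then v(t) → e_k as t → ∞. -/

import Mathlib

open Filter Topology Set

/-- Barrier lemma: if `h ≥ 0` initially and `h' > 0` whenever `h = 0`, then `h ≥ 0` forever. -/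
lemma barrier_aux {h h' : ℝ → ℝ} {t0 : ℝ}
    (hd : ∀ t ≥ t0, HasDerivAt h (h' t) t)
    (h0 : 0 ≤ h t0)
    (hb : ∀ t ≥ t0, h t = 0 → 0 < h' t) :
    ∀ t ≥ t0, 0 ≤ h t := by
  intro t1 ht1
  by_contra hneg
  push_neg at hneg
  set A : Set ℝ := {t | t ∈ Icc t0 t1 ∧ 0 ≤ h t} with hA
  have hAne : A.Nonempty := ⟨t0, ⟨le_refl _, ht1⟩, h0⟩
  have hAbdd : BddAbove A := ⟨t1, fun t ht => ht.1.2⟩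
  set s := sSup A with hs
  have hst0 : t0 ≤ s := le_csSup hAbdd ⟨⟨le_refl _, ht1⟩, h0⟩
  have hst1 : s ≤ t1 := csSup_le hAne fun t ht => ht.1.2
  have hcont : ContinuousAt h s := (hd s hst0).continuousAt
  -- h s ≥ 0
  have hclos : s ∈ closure A := csSup_mem_closure hAne hAbdd
  have hnb : (𝓝[A] s).NeBot := mem_closure_iff_nhdsWithin_neBot.1 hclos
  haveI := hnb
  have hge : 0 ≤ h s := by
    have ht : Tendsto h (𝓝[A] s) (𝓝 (h s)) :=
      (hcont.continuousWithinAt : ContinuousWithinAt h A s).tendsto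
    exact ge_of_tendsto ht (eventually_nhdsWithin_of_forall fun t ht => ht.2)
  have hstlt : s < t1 := by
    rcases lt_or_eq_of_le hst1 with h' | h'
    · exact h'
    · exact absurd (h' ▸ hge) (not_le.2 hneg)
  have hafter : ∀ t, s < t → t ≤ t1 → h t < 0 := by
    intro t hst htt1
    by_contra hge'
    push_neg at hge'
    exact absurd (le_csSup hAbdd ⟨⟨hst0.trans hst.le, htt1⟩, hge'⟩) (not_le.2 hst)
  -- h s ≤ 0
  have hle : h s ≤ 0 := by
    have hmem : Ioo s t1 ∈ 𝓝[>] s := Ioo_mem_nhdsGT hstlt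
    haveI : (𝓝[>] s).NeBot := nhdsGT_neBot s
    have ht : Tendsto h (𝓝[>] s) (𝓝 (h s)) :=
      (hcont.continuousWithinAt : ContinuousWithinAt h (Ioi s) s).tendsto
    refine le_of_tendsto ht ?_
    filter_upwards [hmem] with t ht
    exact (hafter t ht.1 ht.2.le).le
  have hzero : h s = 0 := le_antisymm hle hge
  have hd' : 0 < h' s := hb s hst0 hzero
  have hslope := hasDerivAt_iff_tendsto_slope.1 (hd s hst0)
  have hev : ∀ᶠ t in 𝓝[≠] s, 0 < slope h s t := hslope.eventually (eventually_gt_nhds hd')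
  have hev' : ∀ᶠ t in 𝓝[>] s, 0 < slope h s t :=
    hev.filter_mono (nhdsWithin_mono s fun t ht => ne_of_gt ht)
  have hmem : Ioo s t1 ∈ 𝓝[>] s := Ioo_mem_nhdsGT hstlt
  have hne : (𝓝[>] s).NeBot := nhdsGT_neBot s
  obtain ⟨t, hslope_pos, htmem⟩ := (hev'.and hmem).exists
  have hlt := hafter t htmem.1 htmem.2.le
  have : slope h s t < 0 := by
    rw [slope_def_field]
    rw [hzero] at *
    have : h t - 0 < 0 := by linarith
    exact div_neg_of_neg_of_pos (by simpa using this) (by linarith [htmem.1])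
  linarith

/-- If `h' ≤ -c` on `[T,T']` then `h T' ≤ h T - c (T'-T)`. -/
lemma decrease_aux {h h' : ℝ → ℝ} {T T' c : ℝ} (hTT : T ≤ T')
    (hd : ∀ t ∈ Icc T T', HasDerivAt h (h' t) t)
    (hc : ∀ t ∈ Icc T T', h' t ≤ -c) :
    h T' ≤ h T - c * (T' - T) := by
  have hg : AntitoneOn (fun t => h t + c * t) (Icc T T') := by
    apply antitoneOn_of_deriv_nonpos (convex_Icc T T')
    · exact ContinuousOn.add
        (fun t ht => ((hd t ht).continuousAt.continuousWithinAt))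
        (by fun_prop)
    · intro t ht
      rw [interior_Icc] at ht
      exact (((hd t (Ioo_subset_Icc_self ht)).add ((hasDerivAt_id t).const_mul c)).differentiableAt).differentiableWithinAt
    · intro t ht
      rw [interior_Icc] at ht
      have hda : HasDerivAt (fun t => h t + c * t) (h' t + c) t := by
        exact ((hd t (Ioo_subset_Icc_self ht)).add ((hasDerivAt_id t).const_mul c)).congr_deriv (by ring)
      rw [hda.deriv]
      have := hc t (Ioo_subset_Icc_self ht)
      linarith
  have := hg ⟨le_refl _, hTT⟩ ⟨hTT, le_refl _⟩ hTT
  simp only at this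
  linarith

/-- Solutions of the scalar linear ODE `f' = g f` are given by the exponential formula. -/
lemma linODE_aux {f g : ℝ → ℝ} (hg : Continuous g)
    (hf : ∀ t ≥ (0:ℝ), HasDerivAt f (g t * f t) t) :
    ∀ t ≥ (0:ℝ), f t = f 0 * Real.exp (∫ s in (0:ℝ)..t, g s) := by
  set G : ℝ → ℝ := fun t => ∫ s in (0:ℝ)..t, g s with hG
  have hGd : ∀ t, HasDerivAt G (g t) t := fun t =>
    (hg.integral_hasStrictDerivAt 0 t).hasDerivAt
  set K : ℝ → ℝ := fun t => f t * Real.exp (-G t) with hK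
  have hKd : ∀ t ≥ (0:ℝ), HasDerivAt K 0 t := by
    intro t ht
    have h1 : HasDerivAt (fun t => Real.exp (-G t)) (Real.exp (-G t) * (-g t)) t :=
      (((hGd t).neg).exp)
    have := (hf t ht).mul h1
    refine this.congr_deriv (Eq.symm ?_)
    ring
  intro t ht
  have hconst : K t = K 0 := by
    have := constant_of_has_deriv_right_zero (f := K) (a := 0) (b := t)
      (fun s hs => (hKd s hs.1).continuousAt.continuousWithinAt)
      (fun s hs => (hKd s hs.1).hasDerivWithinAt)
    exact this t ⟨ht, le_refl _⟩
  have hG0 : G 0 = 0 := by simp [hG]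
  have hexp : Real.exp (-G t) ≠ 0 := Real.exp_ne_zero _
  have : f t * Real.exp (-G t) = f 0 := by
    simpa [hK, hG0] using hconst
  rw [← this]
  rw [mul_assoc, ← Real.exp_add]
  simp [hG]

/-- Clamping a function continuous on `[0,∞)` gives a globally continuous function. -/
lemma clamp_cont_aux {f : ℝ → ℝ} (hf : ∀ t ≥ (0:ℝ), ContinuousAt f t) :
    Continuous (fun t => f (max t 0)) := by
  rw [continuous_iff_continuousAt]
  intro t
  exact ContinuousAt.comp (hf _ (le_max_right _ _))
    ((continuous_id.max continuous_const).continuousAt)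

set_option maxHeartbeats 1600000 in
/-- For even positive `a`, the eigenvector `e_k` attracts every solution of the
nonlinear Hebbian loading dynamics started in its basin of attraction. -/
theorem stmt1 (R : ℕ) (hR : 2 ≤ R) (a : ℕ) (ha : 2 ≤ a) (haeven : Even a)
    (lam : Fin R → ℝ) (hpos : ∀ i, 0 < lam i)
    (hdist : ∀ i j : Fin R, i ≠ j → lam i ≠ lam j)
    (k : Fin R) (v : ℝ → Fin R → ℝ)
    (hode : ∀ t ≥ (0 : ℝ), ∀ i,
      HasDerivAt (fun s => v s i)
        (lam i * (v t i) ^ a - v t i * ∑ j, lam j * (v t j) ^ (a + 1)) t)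
    (hk0 : 0 < v 0 k)
    (hbasin : ∀ i, i ≠ k →
      lam i ^ (((a : ℝ) - 1)⁻¹) * v 0 i < lam k ^ (((a : ℝ) - 1)⁻¹) * v 0 k) :
    Tendsto v atTop (𝓝 (Pi.single k 1)) := by
  -- write a = m + 1 with m odd, m ≥ 1
  obtain ⟨m, rfl⟩ : ∃ m, a = m + 1 := ⟨a - 1, by omega⟩
  have hm1 : 1 ≤ m := by omega
  have hmodd : Odd m := by
    rcases haeven with ⟨r, hr⟩
    exact ⟨r - 1, by omega⟩
  -- basic objects
  set C : Fin R → ℝ := fun i => lam i ^ ((((m+1:ℕ) : ℝ) - 1)⁻¹) with hCdef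
  have hCpos : ∀ i, 0 < C i := fun i => Real.rpow_pos_of_pos (hpos i) _
  have hCm : ∀ i, C i ^ m = lam i := by
    intro i
    have hme : ((((m+1:ℕ) : ℝ) - 1)⁻¹) * (m : ℝ) = 1 := by
      have hm0 : (m : ℝ) ≠ 0 := Nat.cast_ne_zero.2 (by omega)
      push_cast
      rw [add_sub_cancel_right, inv_mul_cancel₀ hm0]
    rw [hCdef]
    rw [← Real.rpow_natCast (lam i ^ ((((m+1:ℕ) : ℝ) - 1)⁻¹)) m,
        ← Real.rpow_mul (hpos i).le, hme, Real.rpow_one]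
  set S : ℝ → ℝ := fun t => ∑ j, lam j * v t j ^ (m + 1 + 1) with hSdef
  set u : Fin R → ℝ → ℝ := fun i t => C i * v t i with hudef
  set x : ℝ → ℝ := fun t => u k t with hxdef
  -- continuity of v on `[0,∞)`
  have hvc : ∀ i, ∀ t ≥ (0:ℝ), ContinuousAt (fun s => v s i) t :=
    fun i t ht => (hode t ht i).continuousAt
  have hSc : ∀ t ≥ (0:ℝ), ContinuousAt S t := by
    intro t ht
    apply tendsto_finset_sum
    intro j _
    exact (tendsto_const_nhds.mul (((hvc j t ht)).pow _))
  -- derivative of u i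
  have hu : ∀ i, ∀ t ≥ (0:ℝ), HasDerivAt (u i) (u i t ^ (m+1) - u i t * S t) t := by
    intro i t ht
    have h0 := (hode t ht i).const_mul (C i)
    refine h0.congr_deriv (Eq.symm ?_)
    simp only [hudef, hSdef]
    rw [← hCm i]
    ring
  have hx0 : 0 < x 0 := mul_pos (hCpos k) hk0
  have hxc : ∀ t ≥ (0:ℝ), ContinuousAt x t := by
    intro t ht
    exact (continuousAt_const.mul (hvc k t ht))
  -- Step 1 : x stays positive
  have hxpos : ∀ t ≥ (0:ℝ), 0 < x t := by
    set g : ℝ → ℝ := fun t => x (max t 0) ^ m - S (max t 0) with hgdef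
    have hgc : Continuous g := by
      apply Continuous.sub
      · exact (clamp_cont_aux hxc).pow m
      · exact clamp_cont_aux hSc
    have hlin := linODE_aux (f := x) hgc ?_
    · intro t ht
      rw [hlin t ht]
      positivity
    · intro t ht
      have := hu k t ht
      convert this using 1
      simp only [hgdef, max_eq_left ht]
      ring
  -- Step 2 : the ratios w i
  set w : Fin R → ℝ → ℝ := fun i t => u i t / x t with hwdef
  have hwk : ∀ t ≥ (0:ℝ), w k t = 1 := fun t ht => div_self (ne_of_gt (hxpos t ht))
  have hwc : ∀ i, ∀ t ≥ (0:ℝ), ContinuousAt (w i) t := by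
    intro i t ht
    exact (continuousAt_const.mul (hvc i t ht)).div (hxc t ht) (ne_of_gt (hxpos t ht))
  have hw : ∀ i, ∀ t ≥ (0:ℝ),
      HasDerivAt (w i) (w i t * (x t ^ m * (w i t ^ m - 1))) t := by
    intro i t ht
    have hxne : x t ≠ 0 := ne_of_gt (hxpos t ht)
    have hd := (hu i t ht).div (hu k t ht) hxne
    refine hd.congr_deriv (Eq.symm ?_)
    simp only [hwdef, hxdef] at hxne ⊢
    field_simp
    have hc : u k t ^ m * (u k t)⁻¹ ^ m = 1 := by rw [← mul_pow, mul_inv_cancel₀ hxne, one_pow]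
    linear_combination (u i t * u i t ^ m * u k t) * hc
  have hbw : ∀ i, i ≠ k → w i 0 < 1 := by
    intro i hik
    have := hbasin i hik
    exact (div_lt_one hx0).2 this
  -- Step 3(i) : w i t < 1 for all time
  have hwlt1 : ∀ i, i ≠ k → ∀ t ≥ (0:ℝ), w i t < 1 := by
    intro i hik
    set f : ℝ → ℝ := fun t => 1 - w i t with hfdef
    set g : ℝ → ℝ := fun t =>
      w i (max t 0) * x (max t 0) ^ m * (∑ j ∈ Finset.range m, w i (max t 0) ^ j) with hgdef
    have hgc : Continuous g := by
      apply Continuous.mul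
      · exact (clamp_cont_aux (hwc i)).mul ((clamp_cont_aux hxc).pow m)
      · apply continuous_finset_sum
        intro j _
        exact (clamp_cont_aux (hwc i)).pow j
    have hlin := linODE_aux (f := f) hgc ?_
    · intro t ht
      have h1 : 0 < f t := by
        rw [hlin t ht]
        have : 0 < f 0 := by simp [hfdef]; linarith [hbw i hik]
        positivity
      simp only [hfdef] at h1
      linarith
    · intro t ht
      have hgeom : ∀ y : ℝ, (∑ j ∈ Finset.range m, y ^ j) * (y - 1) = y ^ m - 1 :=
        fun y => geom_sum_mul y m
      have hd := (hw i t ht).const_sub 1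
      refine hd.congr_deriv (Eq.symm ?_)
      simp only [hgdef, hfdef, max_eq_left ht]
      have hg2 := hgeom (w i t)
      linear_combination (-(w i t * x t ^ m)) * hg2
  -- Step 3(ii) : the sign of w i is constant
  have hwformula : ∀ i, i ≠ k → ∀ t ≥ (0:ℝ), w i t =
      w i 0 * Real.exp (∫ s in (0:ℝ)..t, (x (max s 0) ^ m * (w i (max s 0) ^ m - 1))) := by
    intro i hik
    apply linODE_aux
    · apply Continuous.mul
      · exact (clamp_cont_aux hxc).pow m
      · exact ((clamp_cont_aux (hwc i)).pow m).sub continuous_const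
    · intro t ht
      have hd := hw i t ht
      convert hd using 1
      simp only [max_eq_left ht]
      ring
  -- monotonicity in the positive case
  have hwpos_mono : ∀ i, i ≠ k → 0 < w i 0 →
      (∀ t ≥ (0:ℝ), 0 < w i t) ∧ AntitoneOn (w i) (Ici 0) := by
    intro i hik h0
    have hp : ∀ t ≥ (0:ℝ), 0 < w i t := by
      intro t ht
      rw [hwformula i hik t ht]
      positivity
    refine ⟨hp, ?_⟩
    apply antitoneOn_of_deriv_nonpos (convex_Ici 0)
    · exact fun t ht => (hwc i t ht).continuousWithinAt
    · intro t ht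
      rw [interior_Ici] at ht
      exact ((hw i t (le_of_lt ht)).differentiableAt).differentiableWithinAt
    · intro t ht
      rw [interior_Ici] at ht
      rw [(hw i t (le_of_lt ht)).deriv]
      have h1 := hp t ht.le
      have h2 : w i t ^ m < 1 := pow_lt_one₀ h1.le (hwlt1 i hik t ht.le) (by omega)
      have h3 : (0:ℝ) < x t ^ m := pow_pos (hxpos t ht.le) m
      nlinarith [mul_pos h1 h3]
  -- monotonicity in the negative case
  have hwneg_mono : ∀ i, i ≠ k → w i 0 < 0 →
      (∀ t ≥ (0:ℝ), w i t < 0) ∧ MonotoneOn (w i) (Ici 0) := by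
    intro i hik h0
    have hp : ∀ t ≥ (0:ℝ), w i t < 0 := by
      intro t ht
      rw [hwformula i hik t ht]
      have := Real.exp_pos (∫ s in (0:ℝ)..t, (x (max s 0) ^ m * (w i (max s 0) ^ m - 1)))
      nlinarith
    refine ⟨hp, ?_⟩
    apply monotoneOn_of_deriv_nonneg (convex_Ici 0)
    · exact fun t ht => (hwc i t ht).continuousWithinAt
    · intro t ht
      rw [interior_Ici] at ht
      exact ((hw i t (le_of_lt ht)).differentiableAt).differentiableWithinAt
    · intro t ht
      rw [interior_Ici] at ht
      rw [(hw i t (le_of_lt ht)).deriv]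
      have h1 := hp t ht.le
      have h2 : w i t ^ m ≤ 0 := Odd.pow_nonpos hmodd h1.le
      have h3 : (0:ℝ) < x t ^ m := pow_pos (hxpos t ht.le) m
      nlinarith [mul_pos (mul_pos (neg_pos.2 h1) h3) (show (0:ℝ) < 1 - w i t ^ m by linarith)]
  -- the zero case
  have hwzero : ∀ i, i ≠ k → w i 0 = 0 → ∀ t ≥ (0:ℝ), w i t = 0 := by
    intro i hik h0 t ht
    rw [hwformula i hik t ht, h0, zero_mul]
  -- uniform bound on |w i|
  set W : Fin R → ℝ := fun i => max 1 |w i 0| with hWdef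
  have habsw : ∀ i, ∀ t ≥ (0:ℝ), |w i t| ≤ W i := by
    intro i t ht
    rcases eq_or_ne i k with rfl | hik
    · rw [hwk t ht]
      simp [hWdef]
    rcases lt_trichotomy (w i 0) 0 with h0 | h0 | h0
    · obtain ⟨hp, hmono⟩ := hwneg_mono i hik h0
      have h1 := hmono (mem_Ici.2 le_rfl) ht ht
      have h2 := hp t ht
      rw [abs_of_neg h2]
      calc -w i t ≤ -w i 0 := by linarith
        _ ≤ |w i 0| := by rw [abs_of_neg h0]
        _ ≤ W i := le_max_right _ _
    · rw [hwzero i hik h0 t ht]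
      simp only [hWdef, abs_zero]
      exact le_max_of_le_left zero_le_one
    · obtain ⟨hp, hmono⟩ := hwpos_mono i hik h0
      have h1 := hmono (mem_Ici.2 le_rfl) ht ht
      have h2 := hp t ht
      rw [abs_of_pos h2]
      calc w i t ≤ w i 0 := h1
        _ ≤ |w i 0| := le_abs_self _
        _ ≤ W i := le_max_right _ _
  -- Step 5 : rewrite the ODE for x
  set b : Fin R → ℝ := fun i => (C i ^ 2)⁻¹ with hbdef
  have hbpos : ∀ i, 0 < b i := fun i => inv_pos.2 (pow_pos (hCpos i) 2)
  set Q : ℝ → ℝ := fun t => ∑ j, b j * w j t ^ (m + 2) with hQdef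
  have hSQ : ∀ t ≥ (0:ℝ), S t = x t ^ (m + 2) * Q t := by
    intro t ht
    have hxne : x t ≠ 0 := ne_of_gt (hxpos t ht)
    simp only [hSdef, hQdef, Finset.mul_sum]
    apply Finset.sum_congr rfl
    intro j _
    have hCne : C j ≠ 0 := ne_of_gt (hCpos j)
    have huw : u j t = w j t * x t := by
      simp only [hwdef]
      field_simp
    have h1 : x t ^ (m+2) * (b j * w j t ^ (m+2)) = b j * u j t ^ (m+2) := by
      rw [huw, mul_pow]
      ring
    rw [h1]
    simp only [hudef, hbdef]
    rw [mul_pow, ← mul_assoc]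
    have h2 : (C j ^ 2)⁻¹ * C j ^ (m + 2) = lam j := by
      rw [pow_add, ← hCm j]
      field_simp
    rw [h2]
  have hxode : ∀ t ≥ (0:ℝ), HasDerivAt x (x t ^ (m+1) * (1 - Q t * x t ^ 2)) t := by
    intro t ht
    have hd := hu k t ht
    rw [hSQ t ht] at hd
    convert hd using 1
    ring
  -- Step 6 : uniform positive lower bound for x
  set Qmax : ℝ := ∑ j, b j * W j ^ (m+2) with hQmaxdef
  have hQub : ∀ t ≥ (0:ℝ), Q t ≤ Qmax := by
    intro t ht
    apply Finset.sum_le_sum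
    intro j _
    have h1 : w j t ^ (m+2) ≤ W j ^ (m+2) := by
      calc w j t ^ (m+2) ≤ |w j t ^ (m+2)| := le_abs_self _
        _ = |w j t| ^ (m+2) := abs_pow _ _
        _ ≤ W j ^ (m+2) := pow_le_pow_left₀ (abs_nonneg _) (habsw j t ht) _
    exact mul_le_mul_of_nonneg_left h1 (hbpos j).le
  set Qm : ℝ := max Qmax 1 with hQmdef
  have hQm0 : (0:ℝ) < Qm := lt_of_lt_of_le one_pos (le_max_right _ _)
  have hQub' : ∀ t ≥ (0:ℝ), Q t ≤ Qm := fun t ht => (hQub t ht).trans (le_max_left _ _)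
  set dl : ℝ := min (x 0) (Real.sqrt (1 / (2 * Qm))) with hdldef
  have hdlpos : 0 < dl := lt_min hx0 (Real.sqrt_pos.2 (by positivity))
  have hdl2 : Qm * dl^2 ≤ 1/2 := by
    have h1 : dl ≤ Real.sqrt (1/(2*Qm)) := min_le_right _ _
    have h2 : dl^2 ≤ 1/(2*Qm) := by
      rw [← Real.sq_sqrt (show (0:ℝ) ≤ 1/(2*Qm) by positivity)]
      exact pow_le_pow_left₀ hdlpos.le h1 2
    calc Qm * dl^2 ≤ Qm * (1/(2*Qm)) := mul_le_mul_of_nonneg_left h2 hQm0.le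
      _ = 1/2 := by
        field_simp
  have hxlb : ∀ t ≥ (0:ℝ), dl ≤ x t := by
    have hb := barrier_aux (h := fun t => x t - dl)
      (h' := fun t => x t ^ (m+1) * (1 - Q t * x t ^ 2)) (t0 := 0)
      (fun t ht => (hxode t ht).sub_const dl)
      (sub_nonneg.2 (min_le_left _ _)) ?_
    · intro t ht
      have h3 := hb t ht
      linarith
    · intro t ht h0
      have hxt : x t = dl := by linarith
      rw [hxt]
      have h1 : Q t * dl ^ 2 ≤ Qm * dl ^ 2 :=
        mul_le_mul_of_nonneg_right (hQub' t ht) (sq_nonneg dl)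
      have h2 : (0:ℝ) < dl ^ (m+1) := pow_pos hdlpos _
      nlinarith
  -- Step 7 : each ratio tends to 0
  have hwten : ∀ i, i ≠ k → Tendsto (w i) atTop (𝓝 0) := by
    intro i hik
    rcases lt_trichotomy (w i 0) 0 with h0 | h0 | h0
    · -- negative case
      obtain ⟨hp, hmono⟩ := hwneg_mono i hik h0
      set F : ℝ → ℝ := fun t => w i (max t 0) with hFdef
      have hFmono : Monotone F := fun s t hst =>
        hmono (mem_Ici.2 (le_max_right _ _)) (mem_Ici.2 (le_max_right _ _))
          (max_le_max hst (le_refl 0))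
      have hFbdd : BddAbove (Set.range F) := by
        refine ⟨0, ?_⟩
        rintro y ⟨t, rfl⟩
        exact (hp _ (le_max_right _ _)).le
      have hFten : Tendsto F atTop (𝓝 (⨆ t, F t)) := tendsto_atTop_ciSup hFmono hFbdd
      set L := ⨆ t, F t with hLdef
      have hL0 : L ≤ 0 := ciSup_le fun t => (hp _ (le_max_right _ _)).le
      have hLge : ∀ t, F t ≤ L := fun t => le_ciSup hFbdd t
      have hLzero : L = 0 := by
        by_contra hne
        have hLneg : L < 0 := lt_of_le_of_ne hL0 hne
        set c0 : ℝ := (-L) * dl ^ m with hc0def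
        have hc0pos : 0 < c0 := mul_pos (by linarith) (pow_pos hdlpos m)
        have hdb : ∀ t ≥ (0:ℝ), -(w i t * (x t ^ m * (w i t ^ m - 1))) ≤ -c0 := by
          intro t ht
          have hwt : w i t ≤ L := by
            have h5 := hLge t
            simp only [hFdef] at h5
            rwa [max_eq_left ht] at h5
          have hwm : w i t ^ m ≤ 0 := Odd.pow_nonpos hmodd (hp t ht).le
          have h2 : dl ^ m ≤ x t ^ m := pow_le_pow_left₀ hdlpos.le (hxlb t ht) m
          have h3 : (0:ℝ) < dl ^ m := pow_pos hdlpos m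
          have k1 : (-L) * dl ^ m ≤ (-(w i t)) * x t ^ m :=
            mul_le_mul (by linarith) h2 h3.le (by linarith)
          have k2 : ((-L) * dl ^ m) * 1 ≤ ((-(w i t)) * x t ^ m) * (1 - w i t ^ m) := by
            apply mul_le_mul k1 (by linarith) one_pos.le
            nlinarith
          nlinarith
        set T : ℝ := (-(w i 0)) / c0 + 1 with hTdef
        have hTpos : 0 < T :=
          add_pos_of_nonneg_of_pos (div_nonneg (by linarith [hp 0 le_rfl]) hc0pos.le) one_pos
        have hdec := decrease_aux (h := fun t => -(w i t))
          (h' := fun t => -(w i t * (x t ^ m * (w i t ^ m - 1)))) (T := 0) (T' := T) (c := c0)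
          hTpos.le (fun t htm => (hw i t htm.1).neg) (fun t htm => hdb t htm.1)
        have hcT : c0 * T = -(w i 0) + c0 := by
          rw [hTdef]
          field_simp
        have := hp T hTpos.le
        linarith
      rw [hLzero] at hFten
      apply hFten.congr'
      filter_upwards [eventually_ge_atTop (0:ℝ)] with t ht
      rw [hFdef]
      simp [max_eq_left ht]
    · -- zero case
      apply Tendsto.congr' ?_ (tendsto_const_nhds (x := (0:ℝ)))
      filter_upwards [eventually_ge_atTop (0:ℝ)] with t ht
      exact (hwzero i hik h0 t ht).symm
    · -- positive case
      obtain ⟨hp, hmono⟩ := hwpos_mono i hik h0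
      set F : ℝ → ℝ := fun t => w i (max t 0) with hFdef
      have hFanti : Antitone F := fun s t hst =>
        hmono (mem_Ici.2 (le_max_right _ _)) (mem_Ici.2 (le_max_right _ _))
          (max_le_max hst (le_refl 0))
      have hFbdd : BddBelow (Set.range F) := by
        refine ⟨0, ?_⟩
        rintro y ⟨t, rfl⟩
        exact (hp _ (le_max_right _ _)).le
      have hFten : Tendsto F atTop (𝓝 (⨅ t, F t)) := tendsto_atTop_ciInf hFanti hFbdd
      set L := ⨅ t, F t with hLdef
      have hL0 : 0 ≤ L := le_ciInf fun t => (hp _ (le_max_right _ _)).le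
      have hLge : ∀ t, L ≤ F t := fun t => ciInf_le hFbdd t
      have hLzero : L = 0 := by
        by_contra hne
        have hLpos : 0 < L := lt_of_le_of_ne hL0 (Ne.symm hne)
        have hw0m : w i 0 ^ m < 1 := pow_lt_one₀ h0.le (hbw i hik) (by omega)
        set c0 : ℝ := L * dl ^ m * (1 - w i 0 ^ m) with hc0def
        have hc0pos : 0 < c0 :=
          mul_pos (mul_pos hLpos (pow_pos hdlpos m)) (by linarith)
        have hdb : ∀ t ≥ (0:ℝ), w i t * (x t ^ m * (w i t ^ m - 1)) ≤ -c0 := by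
          intro t ht
          have hwt : L ≤ w i t := by
            have h5 := hLge t
            simp only [hFdef] at h5
            rwa [max_eq_left ht] at h5
          have hwle : w i t ≤ w i 0 := hmono (mem_Ici.2 le_rfl) ht ht
          have hwm : w i t ^ m ≤ w i 0 ^ m := pow_le_pow_left₀ (hp t ht).le hwle m
          have h2 : dl ^ m ≤ x t ^ m := pow_le_pow_left₀ hdlpos.le (hxlb t ht) m
          have h3 : (0:ℝ) < dl ^ m := pow_pos hdlpos m
          have k1 : L * dl ^ m ≤ w i t * x t ^ m :=
            mul_le_mul hwt h2 h3.le (by linarith [hp t ht])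
          have k2 : (L * dl ^ m) * (1 - w i 0 ^ m) ≤ (w i t * x t ^ m) * (1 - w i t ^ m) := by
            apply mul_le_mul k1 (by linarith) (by linarith)
            exact mul_nonneg (hp t ht).le (pow_nonneg (hxpos t ht).le m)
          nlinarith
        set T : ℝ := (w i 0) / c0 + 1 with hTdef
        have hTpos : 0 < T :=
          add_pos_of_nonneg_of_pos (div_nonneg h0.le hc0pos.le) one_pos
        have hdec := decrease_aux (h := w i)
          (h' := fun t => w i t * (x t ^ m * (w i t ^ m - 1))) (T := 0) (T' := T) (c := c0)
          hTpos.le (fun t htm => hw i t htm.1) (fun t htm => hdb t htm.1)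
        have hcT : c0 * T = w i 0 + c0 := by
          rw [hTdef]
          field_simp
        have := hp T hTpos.le
        linarith
      rw [hLzero] at hFten
      apply hFten.congr'
      filter_upwards [eventually_ge_atTop (0:ℝ)] with t ht
      rw [hFdef]
      simp [max_eq_left ht]
  -- Step 8 : Q tends to b k
  have hQten : Tendsto Q atTop (𝓝 (b k)) := by
    have h1 : Tendsto Q atTop (𝓝 (∑ j, if j = k then b k else 0)) := by
      apply tendsto_finset_sum
      intro j _
      rcases eq_or_ne j k with rfl | hjk
      · simp only [if_pos]
        apply Tendsto.congr' ?_ (tendsto_const_nhds (x := b j))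
        filter_upwards [eventually_ge_atTop (0:ℝ)] with t ht
        rw [hwk t ht]
        simp
      · simp only [if_neg hjk]
        have h2 := ((hwten j hjk).pow (m+2)).const_mul (b j)
        simpa using h2
    simpa using h1
  -- Step 9/10 : x tends to C k
  have hCk := hCpos k
  have hbkpos := hbpos k
  have hbkCk : b k * C k ^ 2 = 1 := by
    simp only [hbdef]
    field_simp
  have hxlim : Tendsto x atTop (𝓝 (C k)) := by
    rw [Metric.tendsto_atTop]
    intro e0 he0
    set e : ℝ := min (e0/2) (C k / 2) with hedef
    have hepos : 0 < e := lt_min (by linarith) (by linarith)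
    have heCk : e ≤ C k / 2 := min_le_right _ _
    set γ : ℝ := e / C k with hγdef
    have hγpos : 0 < γ := div_pos hepos hCk
    have hγCk : γ * C k = e := by
      rw [hγdef]
      field_simp
    have hbγ : b k * C k * e = γ := by
      simp only [hbdef, hγdef]
      field_simp
    set η : ℝ := min (min (b k / 2) (γ / (C k + e)^2)) (γ / (2 * C k ^ 2)) with hηdef
    have hηpos : 0 < η := by
      apply lt_min (lt_min (by linarith) _) _
      · positivity
      · positivity
    have hη1 : η ≤ b k / 2 := (min_le_left _ _).trans (min_le_left _ _)
    have hη2 : η * (C k + e)^2 ≤ γ := by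
      have h : η ≤ γ / (C k + e)^2 :=
        (min_le_left (min (b k / 2) (γ / (C k + e)^2)) (γ / (2 * C k ^ 2))).trans
          (min_le_right (b k / 2) (γ / (C k + e)^2))
      calc η * (C k + e)^2 ≤ (γ / (C k + e)^2) * (C k + e)^2 :=
            mul_le_mul_of_nonneg_right h (by positivity)
        _ = γ := by field_simp
    have hη3 : η * (2 * C k ^ 2) ≤ γ := by
      have h := min_le_right (min (b k / 2) (γ / (C k + e)^2)) (γ / (2 * C k ^ 2))
      calc η * (2 * C k ^ 2) ≤ (γ / (2 * C k ^ 2)) * (2 * C k ^ 2) :=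
            mul_le_mul_of_nonneg_right h (by positivity)
        _ = γ := by field_simp
    -- eventual closeness of Q
    have hev : ∀ᶠ t in atTop, |Q t - b k| ≤ η := by
      rw [Metric.tendsto_atTop] at hQten
      obtain ⟨N, hN⟩ := hQten η hηpos
      filter_upwards [eventually_ge_atTop N] with t ht
      exact le_of_lt (by simpa [Real.dist_eq] using hN t ht)
    obtain ⟨T0, hT0⟩ := eventually_atTop.1 hev
    set T : ℝ := max T0 0 with hTdef
    have hTnn : (0:ℝ) ≤ T := le_max_right _ _
    have hQT : ∀ t ≥ T, |Q t - b k| ≤ η := fun t ht => hT0 t ((le_max_left _ _).trans ht)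
    -- the two key sign conditions
    have hXup : ∀ t ≥ T, C k + e ≤ x t → 1 - Q t * x t ^ 2 ≤ -γ := by
      intro t ht hx
      obtain ⟨hQ1, hQ2⟩ := abs_le.1 (hQT t ht)
      have hX2 : (C k + e)^2 ≤ x t ^ 2 := pow_le_pow_left₀ (by positivity) hx 2
      nlinarith [mul_nonneg (show (0:ℝ) ≤ Q t - (b k - η) by linarith) (sq_nonneg (x t)),
        mul_le_mul_of_nonneg_left hX2 (show (0:ℝ) ≤ b k - η by linarith),
        mul_nonneg hbkpos.le (sq_nonneg e)]
    have hXdown : ∀ t ≥ T, x t ≤ C k - e → γ ≤ 1 - Q t * x t ^ 2 := by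
      intro t ht hx
      obtain ⟨hQ1, hQ2⟩ := abs_le.1 (hQT t ht)
      have hxnn : 0 ≤ x t := (hxpos t (hTnn.trans ht)).le
      have hX2 : x t ^ 2 ≤ (C k - e)^2 := pow_le_pow_left₀ hxnn hx 2
      have hCe2 : (C k - e)^2 ≤ C k ^ 2 :=
        pow_le_pow_left₀ (by linarith) (by linarith) 2
      have h2e : 2 * e ≤ C k := by linarith
      nlinarith [mul_nonneg (show (0:ℝ) ≤ b k + η - Q t by linarith) (sq_nonneg (x t)),
        mul_le_mul_of_nonneg_left hX2 (show (0:ℝ) ≤ b k + η by linarith),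
        mul_le_mul_of_nonneg_left hCe2 hηpos.le,
        mul_le_mul_of_nonneg_left h2e (mul_nonneg hbkpos.le hepos.le)]
    -- derivative bounds away from the equilibrium
    set c1 : ℝ := (C k + e)^(m+1) * γ with hc1def
    have hc1pos : 0 < c1 := mul_pos (pow_pos (by linarith) _) hγpos
    have hder_up : ∀ t ≥ T, C k + e ≤ x t →
        x t ^ (m+1) * (1 - Q t * x t ^ 2) ≤ -c1 := by
      intro t ht hx
      have h1 := hXup t ht hx
      have h2 : (C k + e)^(m+1) ≤ x t ^(m+1) := pow_le_pow_left₀ (by positivity) hx _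
      have h3 : x t ^ (m+1) * (1 - Q t * x t ^ 2) ≤ x t ^ (m+1) * (-γ) :=
        mul_le_mul_of_nonneg_left h1 (pow_nonneg (hxpos t (hTnn.trans ht)).le _)
      have h4 : (C k + e)^(m+1) * γ ≤ x t ^ (m+1) * γ :=
        mul_le_mul_of_nonneg_right h2 hγpos.le
      nlinarith
    set c2 : ℝ := dl ^ (m+1) * γ with hc2def
    have hc2pos : 0 < c2 := mul_pos (pow_pos hdlpos _) hγpos
    have hder_down : ∀ t ≥ T, x t ≤ C k - e →
        c2 ≤ x t ^ (m+1) * (1 - Q t * x t ^ 2) := by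
      intro t ht hx
      have h1 := hXdown t ht hx
      have h2 : dl ^ (m+1) ≤ x t ^ (m+1) :=
        pow_le_pow_left₀ hdlpos.le (hxlb t (hTnn.trans ht)) _
      calc c2 = dl ^ (m+1) * γ := rfl
        _ ≤ x t ^ (m+1) * (1 - Q t * x t ^ 2) :=
          mul_le_mul h2 h1 hγpos.le (pow_nonneg (hxpos t (hTnn.trans ht)).le _)
    -- x eventually gets below C k + e and stays there
    obtain ⟨T1, hT1ge, hT1⟩ : ∃ T1 ≥ T, x T1 < C k + e := by
      by_contra hcon
      push_neg at hcon
      set T' : ℝ := T + (x T)/c1 + 1 with hT'def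
      clear_value T'
      have hxT : 0 < x T := hxpos T hTnn
      have hT' : T ≤ T' := by
        have : 0 ≤ (x T)/c1 := div_nonneg hxT.le hc1pos.le
        linarith
      have hdec := decrease_aux (h := x)
        (h' := fun t => x t ^ (m+1) * (1 - Q t * x t ^ 2)) hT'
        (fun t htm => hxode t (hTnn.trans htm.1))
        (fun t htm => hder_up t htm.1 (hcon t htm.1))
      have hcT : c1 * (T' - T) = x T + c1 := by
        rw [hT'def]
        field_simp
        ring
      have := hxpos T' (hTnn.trans hT')
      linarith
    have hT1nn : (0:ℝ) ≤ T1 := hTnn.trans hT1ge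
    have hupper : ∀ t ≥ T1, x t ≤ C k + e := by
      have hb := barrier_aux (h := fun t => (C k + e) - x t)
        (h' := fun t => -(x t ^ (m+1) * (1 - Q t * x t ^ 2))) (t0 := T1)
        (fun t ht => (hxode t (hT1nn.trans ht)).const_sub _)
        (by linarith) ?_
      · intro t ht
        have h3 := hb t ht
        linarith
      · intro t ht h0
        have hx : C k + e ≤ x t := by linarith
        have := hder_up t (hT1ge.trans ht) hx
        linarith
    -- x eventually gets above C k - e and stays there
    obtain ⟨T2, hT2ge, hT2⟩ : ∃ T2 ≥ T, C k - e < x T2 := by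
      by_contra hcon
      push_neg at hcon
      set T' : ℝ := T + (C k)/c2 with hT'def
      clear_value T'
      have hT' : T ≤ T' := by
        have : 0 ≤ (C k)/c2 := div_nonneg hCk.le hc2pos.le
        linarith
      have hdec := decrease_aux (h := fun t => -(x t))
        (h' := fun t => -(x t ^ (m+1) * (1 - Q t * x t ^ 2))) (c := c2) hT'
        (fun t htm => (hxode t (hTnn.trans htm.1)).neg)
        (fun t htm => by
          have := hder_down t htm.1 (hcon t htm.1)
          linarith)
      have hcT : c2 * (T' - T) = C k := by
        rw [hT'def]
        field_simp
        ring
      have h5 := hxlb T hTnn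
      have h6 := hcon T' hT'
      linarith
    have hT2nn : (0:ℝ) ≤ T2 := hTnn.trans hT2ge
    have hlower : ∀ t ≥ T2, C k - e ≤ x t := by
      have hb := barrier_aux (h := fun t => x t - (C k - e))
        (h' := fun t => x t ^ (m+1) * (1 - Q t * x t ^ 2)) (t0 := T2)
        (fun t ht => (hxode t (hT2nn.trans ht)).sub_const _)
        (by linarith) ?_
      · intro t ht
        have h3 := hb t ht
        linarith
      · intro t ht h0
        have hx : x t ≤ C k - e := by linarith
        have := hder_down t (hT2ge.trans ht) hx
        linarith
    refine ⟨max T1 T2, fun t ht => ?_⟩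
    have h1 := hupper t ((le_max_left _ _).trans ht)
    have h2 := hlower t ((le_max_right _ _).trans ht)
    rw [Real.dist_eq]
    have h3 : e ≤ e0/2 := min_le_left _ _
    rw [abs_lt]
    constructor <;> linarith
  -- Step 11 : conclusion
  rw [tendsto_pi_nhds]
  intro i
  rcases eq_or_ne i k with rfl | hik
  · have h1 : Tendsto (fun t => x t / C i) atTop (𝓝 (C i / C i)) := hxlim.div_const _
    rw [div_self (ne_of_gt (hCpos i))] at h1
    rw [Pi.single_eq_same]
    apply h1.congr'
    filter_upwards [eventually_ge_atTop (0:ℝ)] with t ht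
    simp only [hxdef, hudef]
    rw [mul_comm, mul_div_assoc, div_self (ne_of_gt (hCpos i)), mul_one]
  · have h1 : Tendsto (fun t => w i t * x t / C i) atTop (𝓝 (0 * C k / C i)) :=
      ((hwten i hik).mul hxlim).div_const _
    rw [zero_mul, zero_div] at h1
    rw [Pi.single_eq_of_ne hik]
    apply h1.congr'
    filter_upwards [eventually_ge_atTop (0:ℝ)] with t ht
    have hxne : x t ≠ 0 := ne_of_gt (hxpos t ht)
    simp only [hwdef, hudef]
    field_simp
    rw [mul_comm, mul_div_assoc, div_self (ne_of_gt (hCpos i)), mul_one]
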